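/- Let φ = (1+√5)/2, A(x,y,z) = (5−√5)yz⁵ + (5+√5)y⁵z − 20y³z³ + (10+10√5)x²yz³ + (10−10√5)x²y³z − 10x⁴yz, and V(x,y,z) = (φ²x² − y²)(φ²y² − z²)(φ²z² − x²). Then for all real x, y, z one has (∂V/∂x)·A(x,y,z) + (∂V/∂y)·A(y,z,x) + (∂V/∂z)·A(z,x,y) = 0; that is, V is a first integral of the icosahedral vector field (A(x,y,z), A(y,z,x), A(z,x,y))/(x²+y²+z²)². -/

import Mathlib

/-- The golden ratio. -/
noncomputable def φ : ℝ := (1 + Real.sqrt 5) / 2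

/-- The numerator of the first component of the icosahedral superflow's vector field. -/
noncomputable def A (x y z : ℝ) : ℝ :=
  (5 - Real.sqrt 5) * y * z ^ 5 + (5 + Real.sqrt 5) * y ^ 5 * z - 20 * y ^ 3 * z ^ 3
    + (10 + 10 * Real.sqrt 5) * x ^ 2 * y * z ^ 3 + (10 - 10 * Real.sqrt 5) * x ^ 2 * y ^ 3 * z
    - 10 * x ^ 4 * y * z

/-- The degree-6 invariant of the icosahedral group. -/
noncomputable def V (x y z : ℝ) : ℝ :=
  (φ ^ 2 * x ^ 2 - y ^ 2) * (φ ^ 2 * y ^ 2 - z ^ 2) * (φ ^ 2 * z ^ 2 - x ^ 2)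

/-- `V_x·A(x,y,z) + V_y·A(y,z,x) + V_z·A(z,x,y) = 0`, i.e. `V` is a first integral of the
icosahedral vector field `(A(x,y,z), A(y,z,x), A(z,x,y))/(x²+y²+z²)²`. -/
theorem stmt1 (x y z : ℝ) :
    deriv (fun s => V s y z) x * A x y z
      + deriv (fun s => V x s z) y * A y z x
      + deriv (fun s => V x y s) z * A z x y = 0 := by
  have hs : Real.sqrt 5 ^ 2 = 5 := Real.sq_sqrt (by norm_num)
  have h1 : HasDerivAt (fun s : ℝ => V s y z)
      ((φ ^ 2 * (2 * x ^ 1)) * (φ ^ 2 * y ^ 2 - z ^ 2) * (φ ^ 2 * z ^ 2 - x ^ 2)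
        + (φ ^ 2 * x ^ 2 - y ^ 2) * (φ ^ 2 * y ^ 2 - z ^ 2) * (-(↑2 * x ^ 1))) x := by
    have := ((((hasDerivAt_pow 2 x).const_mul (φ ^ 2)).sub_const (y ^ 2)).mul_const
        (φ ^ 2 * y ^ 2 - z ^ 2)).mul ((hasDerivAt_pow 2 x).const_sub (φ ^ 2 * z ^ 2))
    simp only [Pi.mul_def] at this
    simp only [V]
    simp only [mul_assoc] at this ⊢
    refine this.congr_deriv ?_
    ring
  have h2 : HasDerivAt (fun s : ℝ => V x s z)
      ((-(↑2 * y ^ 1)) * ((φ ^ 2 * y ^ 2 - z ^ 2) * (φ ^ 2 * z ^ 2 - x ^ 2))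
        + (φ ^ 2 * x ^ 2 - y ^ 2) * ((φ ^ 2 * (2 * y ^ 1)) * (φ ^ 2 * z ^ 2 - x ^ 2))) y := by
    have := ((hasDerivAt_pow 2 y).const_sub (φ ^ 2 * x ^ 2)).mul
        ((((hasDerivAt_pow 2 y).const_mul (φ ^ 2)).sub_const (z ^ 2)).mul_const
          (φ ^ 2 * z ^ 2 - x ^ 2))
    simp only [Pi.mul_def] at this
    simp only [V]
    simp only [mul_assoc] at this ⊢
    refine this.congr_deriv ?_
    ring
  have h3 : HasDerivAt (fun s : ℝ => V x y s)
      ((φ ^ 2 * x ^ 2 - y ^ 2) * ((-(↑2 * z ^ 1)) * (φ ^ 2 * z ^ 2 - x ^ 2)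
        + (φ ^ 2 * y ^ 2 - z ^ 2) * (φ ^ 2 * (2 * z ^ 1)))) z := by
    have := (((hasDerivAt_pow 2 z).const_sub (φ ^ 2 * y ^ 2)).mul
        (((hasDerivAt_pow 2 z).const_mul (φ ^ 2)).sub_const (x ^ 2))).const_mul
        (φ ^ 2 * x ^ 2 - y ^ 2)
    simp only [Pi.mul_def] at this
    simp only [V]
    simp only [mul_assoc] at this ⊢
    refine this.congr_deriv ?_
    ring
  rw [h1.deriv, h2.deriv, h3.deriv]
  simp only [A, φ]
  linear_combination
    ((-3/8:ℝ) * x * y * z ^ 9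
      + (-5/8:ℝ) * x * y * z ^ 9 * Real.sqrt 5
      + (-1/8:ℝ) * x * y * z ^ 9 * Real.sqrt 5 ^ 2
      + (1/8:ℝ) * x * y * z ^ 9 * Real.sqrt 5 ^ 3
      + (87/32:ℝ) * x * y ^ 3 * z ^ 7
      + (47/32:ℝ) * x * y ^ 3 * z ^ 7 * Real.sqrt 5
      + (29/16:ℝ) * x * y ^ 3 * z ^ 7 * Real.sqrt 5 ^ 2
      + (1/16:ℝ) * x * y ^ 3 * z ^ 7 * Real.sqrt 5 ^ 3
      + (-1/32:ℝ) * x * y ^ 3 * z ^ 7 * Real.sqrt 5 ^ 4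
      + (-1/32:ℝ) * x * y ^ 3 * z ^ 7 * Real.sqrt 5 ^ 5
      + (-9/1:ℝ) * x * y ^ 5 * z ^ 5
      + (-25/8:ℝ) * x * y ^ 5 * z ^ 5 * Real.sqrt 5
      + (-39/8:ℝ) * x * y ^ 5 * z ^ 5 * Real.sqrt 5 ^ 2
      + (-11/8:ℝ) * x * y ^ 5 * z ^ 5 * Real.sqrt 5 ^ 3
      + (-5/8:ℝ) * x * y ^ 5 * z ^ 5 * Real.sqrt 5 ^ 4
      + (87/32:ℝ) * x * y ^ 7 * z ^ 3
      + (53/32:ℝ) * x * y ^ 7 * z ^ 3 * Real.sqrt 5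
      + (15/16:ℝ) * x * y ^ 7 * z ^ 3 * Real.sqrt 5 ^ 2
      + (5/16:ℝ) * x * y ^ 7 * z ^ 3 * Real.sqrt 5 ^ 3
      + (11/32:ℝ) * x * y ^ 7 * z ^ 3 * Real.sqrt 5 ^ 4
      + (1/32:ℝ) * x * y ^ 7 * z ^ 3 * Real.sqrt 5 ^ 5
      + (-3/8:ℝ) * x * y ^ 9 * z
      + (-5/8:ℝ) * x * y ^ 9 * z * Real.sqrt 5
      + (-1/8:ℝ) * x * y ^ 9 * z * Real.sqrt 5 ^ 2
      + (1/8:ℝ) * x * y ^ 9 * z * Real.sqrt 5 ^ 3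
      + (87/32:ℝ) * x ^ 3 * y * z ^ 7
      + (53/32:ℝ) * x ^ 3 * y * z ^ 7 * Real.sqrt 5
      + (15/16:ℝ) * x ^ 3 * y * z ^ 7 * Real.sqrt 5 ^ 2
      + (5/16:ℝ) * x ^ 3 * y * z ^ 7 * Real.sqrt 5 ^ 3
      + (11/32:ℝ) * x ^ 3 * y * z ^ 7 * Real.sqrt 5 ^ 4
      + (1/32:ℝ) * x ^ 3 * y * z ^ 7 * Real.sqrt 5 ^ 5
      + (63/16:ℝ) * x ^ 3 * y ^ 3 * z ^ 5
      + (5/8:ℝ) * x ^ 3 * y ^ 3 * z ^ 5 * Real.sqrt 5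
      + (9/4:ℝ) * x ^ 3 * y ^ 3 * z ^ 5 * Real.sqrt 5 ^ 2
      + (7/8:ℝ) * x ^ 3 * y ^ 3 * z ^ 5 * Real.sqrt 5 ^ 3
      + (5/16:ℝ) * x ^ 3 * y ^ 3 * z ^ 5 * Real.sqrt 5 ^ 4
      + (63/16:ℝ) * x ^ 3 * y ^ 5 * z ^ 3
      + (5/8:ℝ) * x ^ 3 * y ^ 5 * z ^ 3 * Real.sqrt 5
      + (9/4:ℝ) * x ^ 3 * y ^ 5 * z ^ 3 * Real.sqrt 5 ^ 2
      + (7/8:ℝ) * x ^ 3 * y ^ 5 * z ^ 3 * Real.sqrt 5 ^ 3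
      + (5/16:ℝ) * x ^ 3 * y ^ 5 * z ^ 3 * Real.sqrt 5 ^ 4
      + (87/32:ℝ) * x ^ 3 * y ^ 7 * z
      + (47/32:ℝ) * x ^ 3 * y ^ 7 * z * Real.sqrt 5
      + (29/16:ℝ) * x ^ 3 * y ^ 7 * z * Real.sqrt 5 ^ 2
      + (1/16:ℝ) * x ^ 3 * y ^ 7 * z * Real.sqrt 5 ^ 3
      + (-1/32:ℝ) * x ^ 3 * y ^ 7 * z * Real.sqrt 5 ^ 4
      + (-1/32:ℝ) * x ^ 3 * y ^ 7 * z * Real.sqrt 5 ^ 5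
      + (-9/1:ℝ) * x ^ 5 * y * z ^ 5
      + (-25/8:ℝ) * x ^ 5 * y * z ^ 5 * Real.sqrt 5
      + (-39/8:ℝ) * x ^ 5 * y * z ^ 5 * Real.sqrt 5 ^ 2
      + (-11/8:ℝ) * x ^ 5 * y * z ^ 5 * Real.sqrt 5 ^ 3
      + (-5/8:ℝ) * x ^ 5 * y * z ^ 5 * Real.sqrt 5 ^ 4
      + (63/16:ℝ) * x ^ 5 * y ^ 3 * z ^ 3
      + (5/8:ℝ) * x ^ 5 * y ^ 3 * z ^ 3 * Real.sqrt 5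
      + (9/4:ℝ) * x ^ 5 * y ^ 3 * z ^ 3 * Real.sqrt 5 ^ 2
      + (7/8:ℝ) * x ^ 5 * y ^ 3 * z ^ 3 * Real.sqrt 5 ^ 3
      + (5/16:ℝ) * x ^ 5 * y ^ 3 * z ^ 3 * Real.sqrt 5 ^ 4
      + (-9/1:ℝ) * x ^ 5 * y ^ 5 * z
      + (-25/8:ℝ) * x ^ 5 * y ^ 5 * z * Real.sqrt 5
      + (-39/8:ℝ) * x ^ 5 * y ^ 5 * z * Real.sqrt 5 ^ 2
      + (-11/8:ℝ) * x ^ 5 * y ^ 5 * z * Real.sqrt 5 ^ 3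
      + (-5/8:ℝ) * x ^ 5 * y ^ 5 * z * Real.sqrt 5 ^ 4
      + (87/32:ℝ) * x ^ 7 * y * z ^ 3
      + (47/32:ℝ) * x ^ 7 * y * z ^ 3 * Real.sqrt 5
      + (29/16:ℝ) * x ^ 7 * y * z ^ 3 * Real.sqrt 5 ^ 2
      + (1/16:ℝ) * x ^ 7 * y * z ^ 3 * Real.sqrt 5 ^ 3
      + (-1/32:ℝ) * x ^ 7 * y * z ^ 3 * Real.sqrt 5 ^ 4
      + (-1/32:ℝ) * x ^ 7 * y * z ^ 3 * Real.sqrt 5 ^ 5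
      + (87/32:ℝ) * x ^ 7 * y ^ 3 * z
      + (53/32:ℝ) * x ^ 7 * y ^ 3 * z * Real.sqrt 5
      + (15/16:ℝ) * x ^ 7 * y ^ 3 * z * Real.sqrt 5 ^ 2
      + (5/16:ℝ) * x ^ 7 * y ^ 3 * z * Real.sqrt 5 ^ 3
      + (11/32:ℝ) * x ^ 7 * y ^ 3 * z * Real.sqrt 5 ^ 4
      + (1/32:ℝ) * x ^ 7 * y ^ 3 * z * Real.sqrt 5 ^ 5
      + (-3/8:ℝ) * x ^ 9 * y * z
      + (-5/8:ℝ) * x ^ 9 * y * z * Real.sqrt 5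
      + (-1/8:ℝ) * x ^ 9 * y * z * Real.sqrt 5 ^ 2
      + (1/8:ℝ) * x ^ 9 * y * z * Real.sqrt 5 ^ 3) * hs
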